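/- For an s-stage additive Runge–Kutta method applied to the perturbed Dahlquist problem u' = λu (high precision) and u' = λu + ετ (low precision), one step satisfies u^{n+1} = (1 + Ψ e) u^n + Δt ε Ψ A^ε T, where Ψ = z b (I - z Ã)^{-1} with z = λΔt, Ã = A + A^ε, provided b^ε = 0, T is the vector of stage roundoff terms, and I - z Ã is invertible. -/
import Mathlib


open Matrix

/-- One step of an `s`-stage additive RK method on the perturbed Dahlquist problem
(`u' = λu` in high precision, `u' = λu + ετ` in low precision), with `b^ε = 0`:
`u^{n+1} = (1 + Ψ e) u^n + Δt ε Ψ A^ε T`, where `Ψ = z b (I - z Ã)⁻¹`, `z = λΔt`,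
`Ã = A + A^ε`. -/
theorem additive_RK_perturbed_dahlquist_one_step
    {s : ℕ} (A Aeps : Matrix (Fin s) (Fin s) ℝ) (b : Fin s → ℝ)
    (lam dt eps u : ℝ) (T Y : Fin s → ℝ) (hT : ∀ i, |T i| ≤ 1 / 2)
    (hinv : IsUnit (1 - (dt * lam) • (A + Aeps)))
    (hY : ∀ i, Y i = u + dt * (A *ᵥ fun j => lam * Y j) i
        + dt * (Aeps *ᵥ fun j => lam * Y j + eps * T j) i) :
    u + dt * (b ⬝ᵥ fun j => lam * Y j) =
      (1 + ((dt * lam) • (b ᵥ* (1 - (dt * lam) • (A + Aeps))⁻¹)) ⬝ᵥ (fun _ => (1 : ℝ))) * u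
        + dt * eps *
          (((dt * lam) • (b ᵥ* (1 - (dt * lam) • (A + Aeps))⁻¹)) ⬝ᵥ (Aeps *ᵥ T)) := by
  set M : Matrix (Fin s) (Fin s) ℝ := 1 - (dt * lam) • (A + Aeps) with hM
  have hdet : IsUnit M.det := (Matrix.isUnit_iff_isUnit_det M).mp hinv
  have hlamY : (fun j => lam * Y j) = lam • Y := by funext j; simp [smul_eq_mul]
  have hmix : (fun j => lam * Y j + eps * T j) = lam • Y + eps • T := by
    funext j; simp [smul_eq_mul]
  have hMY : M *ᵥ Y = (fun i => u + dt * eps * (Aeps *ᵥ T) i) := by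
    funext i
    have h := hY i
    rw [hlamY, hmix] at h
    simp only [Matrix.mulVec_add, Matrix.mulVec_smul, Pi.add_apply, Pi.smul_apply,
      smul_eq_mul] at h
    simp only [hM, Matrix.sub_mulVec, Matrix.one_mulVec, Matrix.smul_mulVec,
      Matrix.add_mulVec, Pi.sub_apply, Pi.smul_apply, Pi.add_apply, smul_eq_mul]
    rw [h]; ring
  have hYeq : Y = M⁻¹ *ᵥ (fun i => u + dt * eps * (Aeps *ᵥ T) i) := by
    rw [← hMY, Matrix.mulVec_mulVec, Matrix.nonsing_inv_mul M hdet, Matrix.one_mulVec]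
  have hw : (fun i => u + dt * eps * (Aeps *ᵥ T) i)
      = u • (fun _ => (1 : ℝ)) + (dt * eps) • (Aeps *ᵥ T) := by
    funext i; simp [smul_eq_mul]
  have hbY : b ⬝ᵥ Y = u * ((b ᵥ* M⁻¹) ⬝ᵥ (fun _ => (1 : ℝ)))
      + (dt * eps) * ((b ᵥ* M⁻¹) ⬝ᵥ (Aeps *ᵥ T)) := by
    rw [hYeq, hw, Matrix.dotProduct_mulVec, dotProduct_add, dotProduct_smul,
      dotProduct_smul, smul_eq_mul, smul_eq_mul]
  rw [hlamY, dotProduct_smul, smul_eq_mul, hbY,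
    smul_dotProduct, smul_dotProduct, smul_eq_mul, smul_eq_mul]
  ring
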